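/- For each quaternion α with |α| < 1, the formal power series k_α(z) = Σ_{k≥0} α^k z^k is the two-sided formal inverse of the polynomial 1 − zα in ℍ[[z]], and its left and right evaluations at any γ with |γ| < 1 are k_α^{eℓ}(γ) = Υ⁻¹·(1 − γ\bar{α}) and k_α^{er}(γ) = (1 − \bar{α}γ)·Υ⁻¹, where Υ = 1 − (α+\bar{α})γ + |α|²γ². Consequently k_α has no zeros in the open unit ball. -/

import Mathlib

open scoped Quaternion

private lemma aux_summable (γ α c : Quaternion ℝ) (h : ‖γ‖ * ‖α‖ < 1) :
    Summable fun n : ℕ => γ ^ n * (c * α ^ n) := by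
  apply Summable.of_norm
  have he : (fun n : ℕ => ‖γ ^ n * (c * α ^ n)‖) = fun n : ℕ => ‖c‖ * (‖γ‖ * ‖α‖) ^ n := by
    funext n
    rw [norm_mul, norm_mul, norm_pow, norm_pow, mul_pow]
    ring
  rw [he]
  exact (summable_geometric_of_lt_one (by positivity) h).mul_left _

private lemma left_eval (α γ : Quaternion ℝ) (h : ‖γ‖ * ‖α‖ < 1) :
    (1 - (α + star α) * γ + ((‖α‖ ^ 2 : ℝ) : Quaternion ℝ) * γ ^ 2) *
      (∑' n : ℕ, γ ^ n * α ^ n) = 1 - γ * star α := by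
  have hr : α + star α = ((2 * α.re : ℝ) : Quaternion ℝ) := Quaternion.self_add_star' α
  have hs : ((‖α‖ ^ 2 : ℝ) : Quaternion ℝ) = star α * α := by
    rw [Quaternion.star_mul_self, Quaternion.normSq_eq_norm_mul_self, sq]
  set c : ℝ := 2 * α.re with hc
  set A : ℕ → Quaternion ℝ := fun n => γ ^ n * α ^ n with hAdef
  set B : ℕ → Quaternion ℝ := fun n => γ ^ (n + 1) * (star α * α ^ n) with hBdef
  have hA : Summable A := by
    have := aux_summable γ α 1 h
    simpa [hAdef] using this
  have hB : Summable B := by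
    have := (aux_summable γ α (star α) h).mul_left γ
    refine this.congr fun n => ?_
    simp only [hBdef, pow_succ', mul_assoc]
  have hA1 : Summable fun n => A (n + 1) := (summable_nat_add_iff 1).mpr hA
  have hB1 : Summable fun n => B (n + 1) := (summable_nat_add_iff 1).mpr hB
  have hAB : Summable fun n => A (n + 1) + B n := hA1.add hB
  have e1 : (c : Quaternion ℝ) * (γ * ∑' n, A n) = ∑' n, (A (n + 1) + B n) := by
    rw [← tsum_mul_left (a := γ), ← tsum_mul_left (a := (c : Quaternion ℝ))]
    refine tsum_congr fun n => ?_
    have hca : (c : Quaternion ℝ) * α ^ n = α ^ (n + 1) + star α * α ^ n := by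
      rw [← hr, add_mul, ← pow_succ']
    calc (c : Quaternion ℝ) * (γ * A n) = (γ * A n) * c := Quaternion.coe_commutes _ _
      _ = γ * (γ ^ n * (α ^ n * c)) := by simp only [hAdef, mul_assoc]
      _ = γ * (γ ^ n * ((c : Quaternion ℝ) * α ^ n)) := by rw [← Quaternion.coe_commutes]
      _ = γ * (γ ^ n * (α ^ (n + 1) + star α * α ^ n)) := by rw [hca]
      _ = A (n + 1) + B n := by
          simp only [hAdef, hBdef, pow_succ' γ, pow_succ' α]
          noncomm_ring
  have e2 : ((‖α‖ ^ 2 : ℝ) : Quaternion ℝ) * (γ ^ 2 * ∑' n, A n) = ∑' n, B (n + 1) := by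
    rw [← tsum_mul_left (a := γ ^ 2), ← tsum_mul_left (a := ((‖α‖ ^ 2 : ℝ) : Quaternion ℝ))]
    refine tsum_congr fun n => ?_
    have hg : γ ^ (n + 1 + 1) = γ ^ 2 * γ ^ n := by
      rw [show n + 1 + 1 = 2 + n by omega, pow_add]
    calc ((‖α‖ ^ 2 : ℝ) : Quaternion ℝ) * (γ ^ 2 * A n)
        = (γ ^ 2 * A n) * ((‖α‖ ^ 2 : ℝ) : Quaternion ℝ) := Quaternion.coe_commutes _ _
      _ = γ ^ 2 * (γ ^ n * (α ^ n * ((‖α‖ ^ 2 : ℝ) : Quaternion ℝ))) := by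
          simp only [hAdef, mul_assoc]
      _ = γ ^ 2 * (γ ^ n * (((‖α‖ ^ 2 : ℝ) : Quaternion ℝ) * α ^ n)) := by
          rw [← Quaternion.coe_commutes]
      _ = γ ^ 2 * (γ ^ n * ((star α * α) * α ^ n)) := by rw [hs]
      _ = B (n + 1) := by
          simp only [hBdef, hg, pow_succ' α]
          noncomm_ring
  have expand : (1 - (α + star α) * γ + ((‖α‖ ^ 2 : ℝ) : Quaternion ℝ) * γ ^ 2) *
      (∑' n : ℕ, γ ^ n * α ^ n)
      = (∑' n, A n) - (c : Quaternion ℝ) * (γ * ∑' n, A n)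
        + ((‖α‖ ^ 2 : ℝ) : Quaternion ℝ) * (γ ^ 2 * ∑' n, A n) := by
    rw [hr]
    simp only [hAdef]
    noncomm_ring
  rw [expand, e1, e2, Summable.tsum_add hA1 hB, Summable.tsum_eq_zero_add hA, Summable.tsum_eq_zero_add hB]
  have hA0 : A 0 = 1 := by simp [hAdef]
  have hB0 : B 0 = γ * star α := by simp [hBdef]
  rw [hA0, hB0]
  abel

private lemma right_eval (α γ : Quaternion ℝ) (h : ‖γ‖ * ‖α‖ < 1) :
    (∑' n : ℕ, α ^ n * γ ^ n) *
      (1 - (α + star α) * γ + ((‖α‖ ^ 2 : ℝ) : Quaternion ℝ) * γ ^ 2) = 1 - star α * γ := by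
  have hr : α + star α = ((2 * α.re : ℝ) : Quaternion ℝ) := Quaternion.self_add_star' α
  have hs : ((‖α‖ ^ 2 : ℝ) : Quaternion ℝ) = α * star α := by
    rw [Quaternion.self_mul_star, Quaternion.normSq_eq_norm_mul_self, sq]
  set c : ℝ := 2 * α.re with hc
  set A : ℕ → Quaternion ℝ := fun n => α ^ n * γ ^ n with hAdef
  set B : ℕ → Quaternion ℝ := fun n => (α ^ n * star α) * γ ^ (n + 1) with hBdef
  have hA : Summable A := by
    have := aux_summable α γ 1 (by rw [mul_comm] at h; exact h)
    simpa [hAdef] using this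
  have hB : Summable B := by
    have := (aux_summable α γ (star α) (by rw [mul_comm] at h; exact h)).mul_right γ
    refine this.congr fun n => ?_
    simp only [hBdef, pow_succ, mul_assoc]
  have hA1 : Summable fun n => A (n + 1) := (summable_nat_add_iff 1).mpr hA
  have hB1 : Summable fun n => B (n + 1) := (summable_nat_add_iff 1).mpr hB
  have e1 : (∑' n, A n) * ((c : Quaternion ℝ) * γ) = ∑' n, (A (n + 1) + B n) := by
    rw [← tsum_mul_right]
    refine tsum_congr fun n => ?_
    have hcomm : Commute (star α) α := star_comm_self' α
    have hca : α ^ n * (c : Quaternion ℝ) = α ^ (n + 1) + α ^ n * star α := by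
      rw [← Quaternion.coe_commutes, ← hr, add_mul, ← pow_succ', (hcomm.pow_right n).eq]
    calc A n * ((c : Quaternion ℝ) * γ) = (α ^ n * (c : Quaternion ℝ)) * γ ^ n * γ := by
          simp only [hAdef, mul_assoc, Quaternion.coe_commutes]
      _ = (α ^ (n + 1) + α ^ n * star α) * γ ^ n * γ := by rw [hca]
      _ = A (n + 1) + B n := by
          simp only [hAdef, hBdef, pow_succ γ]
          noncomm_ring
  have e2 : (∑' n, A n) * (((‖α‖ ^ 2 : ℝ) : Quaternion ℝ) * γ ^ 2) = ∑' n, B (n + 1) := by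
    rw [← tsum_mul_right]
    refine tsum_congr fun n => ?_
    have hg : γ ^ (n + 1 + 1) = γ ^ n * γ ^ 2 := by
      rw [show n + 1 + 1 = n + 2 by omega, pow_add]
    calc A n * (((‖α‖ ^ 2 : ℝ) : Quaternion ℝ) * γ ^ 2)
        = (α ^ n * ((‖α‖ ^ 2 : ℝ) : Quaternion ℝ)) * (γ ^ n * γ ^ 2) := by
          simp only [hAdef, mul_assoc, Quaternion.coe_commutes]
      _ = ((α * star α) * α ^ n) * (γ ^ n * γ ^ 2) := by
          rw [← Quaternion.coe_commutes, hs]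
      _ = (α * (α ^ n * star α)) * (γ ^ n * γ ^ 2) := by
          have hcm : Commute (star α) α := star_comm_self' α
          rw [mul_assoc α (star α) (α ^ n), (hcm.pow_right n).eq]
      _ = B (n + 1) := by
          simp only [hBdef, hg, pow_succ' α]
          noncomm_ring
  have expand : (∑' n : ℕ, α ^ n * γ ^ n) *
      (1 - (α + star α) * γ + ((‖α‖ ^ 2 : ℝ) : Quaternion ℝ) * γ ^ 2)
      = (∑' n, A n) - (∑' n, A n) * ((c : Quaternion ℝ) * γ)
        + (∑' n, A n) * (((‖α‖ ^ 2 : ℝ) : Quaternion ℝ) * γ ^ 2) := by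
    rw [hr]
    simp only [hAdef]
    noncomm_ring
  rw [expand, e1, e2, Summable.tsum_add hA1 hB, Summable.tsum_eq_zero_add hA, Summable.tsum_eq_zero_add hB]
  have hA0 : A 0 = 1 := by simp [hAdef]
  have hB0 : B 0 = star α * γ := by simp [hBdef]
  rw [hA0, hB0]
  abel

/-- The power series `k_α = Σ α^k z^k` (|α| < 1) is the two-sided formal inverse of
`1 − zα`, its left/right evaluations on the unit ball are given by explicit formulas,
and it has no left or right zeros in the unit ball. -/
theorem stmt16 (α : Quaternion ℝ) (hα : ‖α‖ < 1) :
    ((PowerSeries.mk fun n => α ^ n) *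
        (1 - PowerSeries.X * PowerSeries.C (R := Quaternion ℝ) α) = 1 ∧
      (1 - PowerSeries.X * PowerSeries.C (R := Quaternion ℝ) α) *
        (PowerSeries.mk fun n => α ^ n) = 1) ∧
    ∀ γ : Quaternion ℝ, ‖γ‖ < 1 →
      ((∑' n : ℕ, γ ^ n * α ^ n) =
          (1 - (α + star α) * γ + ((‖α‖ ^ 2 : ℝ) : Quaternion ℝ) * γ ^ 2)⁻¹ *
            (1 - γ * star α)) ∧
      ((∑' n : ℕ, α ^ n * γ ^ n) =
          (1 - star α * γ) *
            (1 - (α + star α) * γ + ((‖α‖ ^ 2 : ℝ) : Quaternion ℝ) * γ ^ 2)⁻¹) ∧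
      (∑' n : ℕ, γ ^ n * α ^ n) ≠ 0 ∧ (∑' n : ℕ, α ^ n * γ ^ n) ≠ 0 := by
  constructor
  · constructor
    · apply PowerSeries.ext; intro n
      cases n with
      | zero => simp
      | succ n =>
        rw [mul_sub, mul_one, map_sub,
          (PowerSeries.commute_X (PowerSeries.C (R := Quaternion ℝ) α)).symm.eq, ← mul_assoc]
        simp [PowerSeries.coeff_succ_mul_X, PowerSeries.coeff_mul_C, pow_succ]
    · apply PowerSeries.ext; intro n
      cases n with
      | zero => simp
      | succ n =>
        rw [sub_mul, one_mul, map_sub, mul_assoc]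
        simp [PowerSeries.coeff_succ_X_mul, PowerSeries.coeff_C_mul, ← pow_succ']
  · intro γ hγ
    have hq : ‖γ‖ * ‖α‖ < 1 := by nlinarith [norm_nonneg γ, norm_nonneg α]
    set Υ : Quaternion ℝ :=
      1 - (α + star α) * γ + ((‖α‖ ^ 2 : ℝ) : Quaternion ℝ) * γ ^ 2 with hΥ
    have hL : Υ * (∑' n : ℕ, γ ^ n * α ^ n) = 1 - γ * star α := left_eval α γ hq
    have hR : (∑' n : ℕ, α ^ n * γ ^ n) * Υ = 1 - star α * γ := right_eval α γ hq
    have hne1 : (1 : Quaternion ℝ) - γ * star α ≠ 0 := by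
      intro h0
      have h1 : γ * star α = 1 := by
        have := sub_eq_zero.mp h0
        exact this.symm
      have : ‖γ * star α‖ < 1 := by
        rw [norm_mul, norm_star]; exact hq
      rw [h1, norm_one] at this
      exact absurd this (lt_irrefl 1)
    have hne2 : (1 : Quaternion ℝ) - star α * γ ≠ 0 := by
      intro h0
      have h1 : star α * γ = 1 := (sub_eq_zero.mp h0).symm
      have : ‖star α * γ‖ < 1 := by
        rw [norm_mul, norm_star, mul_comm]; exact hq
      rw [h1, norm_one] at this
      exact absurd this (lt_irrefl 1)
    have hΥne : Υ ≠ 0 := by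
      intro h0
      rw [h0, zero_mul] at hL
      exact hne1 hL.symm
    have hS : (∑' n : ℕ, γ ^ n * α ^ n) = Υ⁻¹ * (1 - γ * star α) := by
      rw [← hL, ← mul_assoc, inv_mul_cancel₀ hΥne, one_mul]
    have hT : (∑' n : ℕ, α ^ n * γ ^ n) = (1 - star α * γ) * Υ⁻¹ := by
      rw [← hR, mul_assoc, mul_inv_cancel₀ hΥne, mul_one]
    refine ⟨hS, hT, ?_, ?_⟩
    · rw [hS]
      exact mul_ne_zero (inv_ne_zero hΥne) hne1
    · rw [hT]
      exact mul_ne_zero hne2 (inv_ne_zero hΥne)
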